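/- Let (X, H) be a hypothesis class. The Threshold dimension of H is finite if and only if there exists ε* > 0 such that for all ε with 0 < ε < ε*, the ε-approximate Threshold dimension of H is finite. -/

import Mathlib

open scoped Classical

/-- `H` has a threshold (half-graph) configuration of size `k`. -/
def ThresholdAt {X : Type*} (H : Set (X → Bool)) (k : ℕ) : Prop :=
  ∃ (x : Fin k → X) (h : Fin k → (X → Bool)),
    (∀ j, h j ∈ H) ∧ ∀ i j, (h j (x i) = true ↔ i < j)

/-- `H` has an ε-approximate threshold configuration of size `k`: distinct `x_1,…,x_k`
and distinct `h_1,…,h_k ∈ H` such that at most `ε·k²` of the pairs `(i,j)` violate the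
half-graph relation `h_j(x_i) = [i < j]`. -/
def ApproxThresholdAt {X : Type*} (H : Set (X → Bool)) (ε : ℝ) (k : ℕ) : Prop :=
  ∃ (x : Fin k → X) (h : Fin k → (X → Bool)),
    Function.Injective x ∧ Function.Injective h ∧ (∀ j, h j ∈ H) ∧
    ((Finset.univ.filter fun p : Fin k × Fin k =>
        ¬ (h p.2 (x p.1) = true ↔ p.1 < p.2)).card : ℝ) ≤ ε * (k : ℝ) ^ 2




lemma choose_identity (n k : ℕ) :
    (n+2).choose (k+2) * ((k+2)*(k+1)) = ((n+2)*(n+1)) * n.choose k := by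
  have h1 : (n+2) * (n+1).choose (k+1) = (n+2).choose (k+2) * (k+2) :=
    Nat.add_one_mul_choose_eq (n+1) (k+1)
  have h2 : (n+1) * n.choose k = (n+1).choose (k+1) * (k+1) :=
    Nat.add_one_mul_choose_eq n k
  calc (n+2).choose (k+2) * ((k+2)*(k+1))
      = ((n+2).choose (k+2) * (k+2)) * (k+1) := by ring
    _ = ((n+2) * (n+1).choose (k+1)) * (k+1) := by rw [h1]
    _ = (n+2) * ((n+1).choose (k+1) * (k+1)) := by ring
    _ = (n+2) * ((n+1) * n.choose k) := by rw [← h2]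
    _ = ((n+2)*(n+1)) * n.choose k := by ring

lemma count_containing {m : ℕ} (n : ℕ) (a b : Fin m) (hab : a ≠ b) :
    ((Finset.powersetCard n (Finset.univ : Finset (Fin m))).filter
      (fun S => a ∈ S ∧ b ∈ S)).card ≤ (m-2).choose (n-2) := by
  classical
  have key : ((Finset.powersetCard n (Finset.univ : Finset (Fin m))).filter
      (fun S => a ∈ S ∧ b ∈ S)).card ≤
      (Finset.powersetCard (n-2) (((Finset.univ : Finset (Fin m)).erase a).erase b)).card := by
    apply Finset.card_le_card_of_injOn (fun S => (S.erase a).erase b)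
    · intro S hS
      simp only [Finset.mem_coe, Finset.mem_filter, Finset.mem_powersetCard] at hS
      obtain ⟨⟨hsub, hcard⟩, ha, hb⟩ := hS
      simp only [Finset.mem_coe, Finset.mem_powersetCard]
      refine ⟨Finset.erase_subset_erase _ (Finset.erase_subset_erase _ hsub), ?_⟩
      have hb' : b ∈ S.erase a := Finset.mem_erase.mpr ⟨hab.symm, hb⟩
      rw [Finset.card_erase_of_mem hb', Finset.card_erase_of_mem ha, hcard]
      omega
    · intro S hS S' hS' he
      simp only [Finset.mem_coe, Finset.mem_filter, Finset.mem_powersetCard] at hS hS'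
      obtain ⟨-, ha, hb⟩ := hS
      obtain ⟨-, ha', hb'⟩ := hS'
      have eS : S = insert a (insert b ((S.erase a).erase b)) := by
        rw [Finset.insert_erase (Finset.mem_erase.mpr ⟨hab.symm, hb⟩), Finset.insert_erase ha]
      have eS' : S' = insert a (insert b ((S'.erase a).erase b)) := by
        rw [Finset.insert_erase (Finset.mem_erase.mpr ⟨hab.symm, hb'⟩), Finset.insert_erase ha']
      simp only [] at he
      rw [eS, eS', he]
  refine key.trans ?_
  rw [Finset.card_powersetCard]
  have : (((Finset.univ : Finset (Fin m)).erase a).erase b).card = m - 2 := by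
    have hb : b ∈ (Finset.univ : Finset (Fin m)).erase a :=
      Finset.mem_erase.mpr ⟨hab.symm, Finset.mem_univ b⟩
    rw [Finset.card_erase_of_mem hb, Finset.card_erase_of_mem (Finset.mem_univ a),
      Finset.card_univ, Fintype.card_fin]
    omega
  rw [this]

lemma extract_good {m t : ℕ} (ht : 1 ≤ t) (hm : 2*t ≤ m) (B : Finset (Fin m × Fin m))
    (hne : ∀ p ∈ B, p.1 ≠ p.2) (hq : B.card * (8*t^2) < m^2) :
    ∃ S : Finset (Fin m), S.card = 2*t ∧ ∀ p ∈ B, ¬(p.1 ∈ S ∧ p.2 ∈ S) := by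
  classical
  by_contra hcon
  push_neg at hcon
  set P := Finset.powersetCard (2*t) (Finset.univ : Finset (Fin m)) with hP
  have hPcard : P.card = m.choose (2*t) := by
    rw [hP, Finset.card_powersetCard, Finset.card_univ, Fintype.card_fin]
  have hlow : P.card ≤ ∑ S ∈ P, (B.filter fun p => p.1 ∈ S ∧ p.2 ∈ S).card := by
    rw [Finset.card_eq_sum_ones]
    apply Finset.sum_le_sum
    intro S hS
    have hScard : S.card = 2*t := (Finset.mem_powersetCard.mp hS).2
    obtain ⟨p, hpB, hp1, hp2⟩ := hcon S hScard
    exact Finset.card_pos.mpr ⟨p, Finset.mem_filter.mpr ⟨hpB, hp1, hp2⟩⟩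
  have hswap : ∑ S ∈ P, (B.filter fun p => p.1 ∈ S ∧ p.2 ∈ S).card
      = ∑ p ∈ B, (P.filter fun S => p.1 ∈ S ∧ p.2 ∈ S).card := by
    simp only [Finset.card_filter]
    exact Finset.sum_comm
  have hup : ∑ p ∈ B, (P.filter fun S => p.1 ∈ S ∧ p.2 ∈ S).card
      ≤ B.card * (m-2).choose (2*t-2) := by
    calc ∑ p ∈ B, (P.filter fun S => p.1 ∈ S ∧ p.2 ∈ S).card
        ≤ ∑ _p ∈ B, (m-2).choose (2*t-2) :=
          Finset.sum_le_sum (fun p hp => count_containing (2*t) p.1 p.2 (hne p hp))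
      _ = B.card * (m-2).choose (2*t-2) := by
          rw [Finset.sum_const, smul_eq_mul]
  have hmain : m.choose (2*t) ≤ B.card * (m-2).choose (2*t-2) := by
    rw [← hPcard]; exact hlow.trans (hswap ▸ hup)
  obtain ⟨M, rfl⟩ : ∃ M, m = M + 2 := ⟨m - 2, by omega⟩
  obtain ⟨T, hT⟩ : ∃ T, 2*t = T + 2 := ⟨2*t - 2, by omega⟩
  rw [hT] at hmain
  have hm2 : (M + 2) - 2 = M := by omega
  have ht2 : (T + 2) - 2 = T := by omega
  rw [hm2, ht2] at hmain
  have hCpos : 0 < M.choose T := Nat.choose_pos (by omega)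
  have hid := choose_identity M T
  -- numeric: B.card * ((T+2)*(T+1)) < (M+2)*(M+1)
  have hnum : B.card * ((T+2)*(T+1)) < (M+2)*(M+1) := by
    have h8 : 8*t^2 = 2*((T+2)*(T+2)) := by nlinarith [hT]
    rw [h8] at hq
    nlinarith [hq, hm]
  have hfin : (M+2).choose (T+2) * ((T+2)*(T+1)) < (M+2).choose (T+2) * ((T+2)*(T+1)) := by
    calc (M+2).choose (T+2) * ((T+2)*(T+1))
        ≤ (B.card * M.choose T) * ((T+2)*(T+1)) :=
          Nat.mul_le_mul_right _ hmain
      _ = (B.card * ((T+2)*(T+1))) * M.choose T := by ring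
      _ < ((M+2)*(M+1)) * M.choose T := by
          exact (Nat.mul_lt_mul_right hCpos).mpr hnum
      _ = (M+2).choose (T+2) * ((T+2)*(T+1)) := hid.symm
  exact lt_irrefl _ hfin

/-- the Threshold dimension of `H` is finite iff there is `ε* > 0` such
that for all `0 < ε < ε*` the ε-approximate Threshold dimension of `H` is finite. -/
theorem stmt_11 {X : Type*} (H : Set (X → Bool)) :
    (∃ k : ℕ, ∀ m : ℕ, ThresholdAt H m → m ≤ k) ↔
    (∃ εs : ℝ, 0 < εs ∧ ∀ ε : ℝ, 0 < ε → ε < εs →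
      ∃ k : ℕ, ∀ m : ℕ, ApproxThresholdAt H ε m → m ≤ k) := by
  constructor
  · rintro ⟨k₀, hk₀⟩
    set t := k₀ + 1 with htdef
    refine ⟨1/(8*(t:ℝ)^2), by positivity, ?_⟩
    intro ε hε hεs
    refine ⟨2*t, fun m hm => ?_⟩
    by_contra hmle
    push_neg at hmle
    obtain ⟨x, h, hxinj, hhinj, hmem, hcount⟩ := hm
    set Bfull := (Finset.univ.filter fun p : Fin m × Fin m =>
        ¬ (h p.2 (x p.1) = true ↔ p.1 < p.2)) with hBfull
    set B := Bfull.filter (fun p => p.1 ≠ p.2) with hB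
    have hBne : ∀ p ∈ B, p.1 ≠ p.2 := fun p hp => (Finset.mem_filter.mp hp).2
    have hBle : (B.card : ℝ) ≤ ε * (m:ℝ)^2 := by
      refine le_trans ?_ hcount
      exact_mod_cast Finset.card_le_card (Finset.filter_subset _ _)
    have hq : B.card * (8*t^2) < m^2 := by
      have hm0 : (0:ℝ) < (m:ℝ) := by
        have : 0 < m := by omega
        exact_mod_cast this
      have hmpos : (0:ℝ) < (m:ℝ)^2 := pow_pos hm0 2
      have htpos : (0:ℝ) < 8*(t:ℝ)^2 := by positivity
      have h1 : (B.card : ℝ) * (8*(t:ℝ)^2) < (m:ℝ)^2 := by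
        have h2 : ε * (m:ℝ)^2 * (8*(t:ℝ)^2) < (1/(8*(t:ℝ)^2)) * (m:ℝ)^2 * (8*(t:ℝ)^2) := by
          have := mul_lt_mul_of_pos_right (mul_lt_mul_of_pos_right hεs hmpos) htpos
          exact this
        have h3 : (1/(8*(t:ℝ)^2)) * (m:ℝ)^2 * (8*(t:ℝ)^2) = (m:ℝ)^2 := by
          rw [one_div, mul_comm _ (8*(t:ℝ)^2), ← mul_assoc, mul_inv_cancel₀ htpos.ne', one_mul]
        calc (B.card : ℝ) * (8*(t:ℝ)^2) ≤ ε * (m:ℝ)^2 * (8*(t:ℝ)^2) :=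
              mul_le_mul_of_nonneg_right hBle (le_of_lt htpos)
          _ < _ := h2
          _ = (m:ℝ)^2 := h3
      exact_mod_cast h1
    obtain ⟨S, hScard, hS⟩ := extract_good (by omega) (by omega) B hBne hq
    have hthr : ThresholdAt H t := by
      set e := S.orderIsoOfFin hScard with he
      set c : Fin (2*t) → Fin m := fun i => (e i : Fin m) with hc
      have hcmono : StrictMono c := fun i j hij => e.strictMono hij
      have hcmem : ∀ i, c i ∈ S := fun i => (e i).2
      refine ⟨fun i => x (c ⟨2*i.val+1, by have := i.isLt; omega⟩),
              fun j => h (c ⟨2*j.val, by have := j.isLt; omega⟩),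
              fun j => hmem _, ?_⟩
      intro i j
      set a : Fin (2*t) := ⟨2*i.val+1, by have := i.isLt; omega⟩ with ha
      set b : Fin (2*t) := ⟨2*j.val, by have := j.isLt; omega⟩ with hbdef
      have hab : c a ≠ c b := by
        intro hcc
        have h1 : a = b := hcmono.injective hcc
        have h2 : (a : ℕ) = (b : ℕ) := congrArg Fin.val h1
        simp only [ha, hbdef] at h2
        omega
      have hpat : h (c b) (x (c a)) = true ↔ c a < c b := by
        by_contra hbad
        exact hS (c a, c b)
          (Finset.mem_filter.mpr ⟨Finset.mem_filter.mpr ⟨Finset.mem_univ _, hbad⟩, hab⟩)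
          ⟨hcmem a, hcmem b⟩
      rw [hpat, hcmono.lt_iff_lt]
      have haval : (a : ℕ) = 2*i.val+1 := rfl
      have hbval : (b : ℕ) = 2*j.val := rfl
      constructor
      · intro hlt
        have : (a:ℕ) < (b:ℕ) := hlt
        rw [Fin.lt_def]; omega
      · intro hlt
        have : (i:ℕ) < (j:ℕ) := hlt
        rw [Fin.lt_def]
        show (a:ℕ) < (b:ℕ)
        omega
    have := hk₀ t hthr
    omega
  · rintro ⟨εs, hεs, hfin⟩
    obtain ⟨k, hk⟩ := hfin (εs/2) (by linarith) (by linarith)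
    refine ⟨k, fun m hm => hk m ?_⟩
    obtain ⟨x, h, hmem, hpat⟩ := hm
    refine ⟨x, h, ?_, ?_, hmem, ?_⟩
    · intro i i' he
      by_contra hne
      rcases Ne.lt_or_gt hne with hlt | hlt
      · have h1 : h i' (x i) = true := (hpat i i').mpr hlt
        rw [he] at h1
        exact absurd ((hpat i' i').mp h1) (lt_irrefl i')
      · have h1 : h i (x i') = true := (hpat i' i).mpr hlt
        rw [← he] at h1
        exact absurd ((hpat i i).mp h1) (lt_irrefl i)
    · intro j j' he
      by_contra hne
      rcases Ne.lt_or_gt hne with hlt | hlt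
      · have h1 : h j' (x j) = true := (hpat j j').mpr hlt
        rw [← he] at h1
        exact absurd ((hpat j j).mp h1) (lt_irrefl j)
      · have h1 : h j (x j') = true := (hpat j' j).mpr hlt
        rw [he] at h1
        exact absurd ((hpat j' j').mp h1) (lt_irrefl j')
    · have hempty : (Finset.univ.filter fun p : Fin m × Fin m =>
          ¬ (h p.2 (x p.1) = true ↔ p.1 < p.2)) = ∅ := by
        apply Finset.filter_eq_empty_iff.mpr
        intro p _
        simp only [not_not]
        exact hpat p.1 p.2
      rw [hempty]
      simp only [Finset.card_empty, Nat.cast_zero]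
      positivity
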